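/- Let g : Θ × S → {0,1} with Θ finite, let μ be a probability measure on S, and let s⁽¹⁾,…,s⁽ᴺ⁾ be i.i.d. samples from μ. Suppose that for every θ ∈ Θ with μ({s : g(θ,s)=1}) > η we have Pr(Σᵢ g(θ, s⁽ⁱ⁾) ≤ m) ≤ exp(−(Nη−m)²/(2Nη)), and that N ≥ (1/η)(m + L + √(2mL + L²)) with L = ln(|Θ|/δ), Nη ≥ m, δ ∈ (0,1). Then with probability at least 1 − δ, every θ̂ ∈ Θ satisfying the empirical constraint Σᵢ g(θ̂, s⁽ⁱ⁾) ≤ m also satisfies μ({s : g(θ̂,s)=1}) ≤ η. -/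

import Mathlib

open MeasureTheory Real

theorem randomized_certification
    {Θ S : Type*} [Fintype Θ] [Nonempty Θ] [MeasurableSpace S]
    (μ : Measure S) [IsProbabilityMeasure μ]
    (g : Θ → S → Bool) (hg : ∀ θ, Measurable (g θ))
    (N m : ℕ) (η δ : ℝ) (hη : 0 < η) (hδ : δ ∈ Set.Ioo (0:ℝ) 1)
    (L : ℝ) (hL : L = Real.log ((Fintype.card Θ) / δ))
    (hNη : (m : ℝ) ≤ N * η)
    (hN : (N : ℝ) ≥ (1 / η) * (m + L + Real.sqrt (2 * m * L + L ^ 2)))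
    (P : Measure (Fin N → S)) (hP : P = Measure.pi fun _ => μ)
    (htail : ∀ θ : Θ, μ {s | g θ s = true} > ENNReal.ofReal η →
      P {ω | (∑ i, if g θ (ω i) then 1 else 0 : ℕ) ≤ m} ≤
        ENNReal.ofReal (Real.exp (-((N : ℝ) * η - m) ^ 2 / (2 * (N * η))))) :
    P {ω | ∀ θ : Θ, (∑ i, if g θ (ω i) then 1 else 0 : ℕ) ≤ m →
        μ {s | g θ s = true} ≤ ENNReal.ofReal η} ≥ ENNReal.ofReal (1 - δ) := by
  obtain ⟨hδ0, hδ1⟩ := hδ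
  have hPprob : IsProbabilityMeasure P := by subst hP; infer_instance
  set c := (Fintype.card Θ : ℝ) with hc
  have hc1 : (1:ℝ) ≤ c := Nat.one_le_cast.2 Fintype.card_pos
  have hcδ : 1 < c / δ := (one_lt_div hδ0).2 (lt_of_lt_of_le hδ1 hc1)
  have hL0 : 0 < L := hL ▸ Real.log_pos hcδ
  have hs0 : (0:ℝ) ≤ 2 * m * L + L ^ 2 := by positivity
  have hx : (m : ℝ) + L + Real.sqrt (2 * m * L + L ^ 2) ≤ N * η := by
    rw [one_div_mul_eq_div, ge_iff_le, div_le_iff₀ hη] at hN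
    linarith
  have hxpos : 0 < (N : ℝ) * η := by
    have := Real.sqrt_nonneg (2 * m * L + L ^ 2)
    have hm : (0:ℝ) ≤ m := Nat.cast_nonneg m
    linarith
  have hkey : L * (2 * ((N:ℝ) * η)) ≤ ((N : ℝ) * η - m) ^ 2 := by
    nlinarith [Real.sq_sqrt hs0, Real.sqrt_nonneg (2 * m * L + L ^ 2)]
  have hexp : Real.exp (-((N : ℝ) * η - m) ^ 2 / (2 * (N * η))) ≤ δ / c := by
    have h1 : -((N : ℝ) * η - m) ^ 2 / (2 * (N * η)) ≤ -L := by
      rw [neg_div, neg_le_neg_iff, le_div_iff₀ (by positivity)]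
      linarith
    calc Real.exp (-((N : ℝ) * η - m) ^ 2 / (2 * (N * η)))
        ≤ Real.exp (-L) := Real.exp_le_exp.2 h1
      _ = δ / c := by
          rw [hL, Real.exp_neg, Real.exp_log (by positivity), inv_div]
  set A := {ω : Fin N → S | ∀ θ : Θ, (∑ i, if g θ (ω i) then 1 else 0 : ℕ) ≤ m →
        μ {s | g θ s = true} ≤ ENNReal.ofReal η} with hA
  set T : Θ → Set (Fin N → S) := fun θ =>
    {ω | μ {s | g θ s = true} > ENNReal.ofReal η ∧
      (∑ i, if g θ (ω i) then 1 else 0 : ℕ) ≤ m} with hT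
  have hcompl : Aᶜ ⊆ ⋃ θ : Θ, T θ := by
    intro ω hω
    simp only [hA, Set.mem_compl_iff, Set.mem_setOf_eq, not_forall] at hω
    obtain ⟨θ, h1, h2⟩ := hω
    exact Set.mem_iUnion.2 ⟨θ, lt_of_not_ge h2, h1⟩
  have hTbound : ∀ θ : Θ, P (T θ) ≤ ENNReal.ofReal (δ / c) := by
    intro θ
    by_cases hb : μ {s | g θ s = true} > ENNReal.ofReal η
    · refine le_trans (measure_mono ?_) ((htail θ hb).trans
        (ENNReal.ofReal_le_ofReal hexp))
      intro ω hω; exact hω.2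
    · have : T θ ⊆ (∅ : Set (Fin N → S)) := fun ω hω => (hb hω.1).elim
      exact le_trans ((measure_mono this).trans_eq measure_empty) zero_le
  have hbad : P Aᶜ ≤ ENNReal.ofReal δ := by
    calc P Aᶜ ≤ ∑' θ : Θ, P (T θ) :=
          (measure_mono hcompl).trans (measure_iUnion_le _)
      _ = ∑ θ : Θ, P (T θ) := tsum_fintype _
      _ ≤ ∑ _θ : Θ, ENNReal.ofReal (δ / c) := Finset.sum_le_sum fun θ _ => hTbound θ
      _ = (Fintype.card Θ : ℕ) • ENNReal.ofReal (δ / c) := by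
          rw [Finset.sum_const, Finset.card_univ]
      _ = ENNReal.ofReal δ := by
          rw [nsmul_eq_mul, ← ENNReal.ofReal_natCast,
            ← ENNReal.ofReal_mul (by positivity)]
          congr 1
          rw [← hc]
          field_simp
  have h1 : (1 : ENNReal) ≤ P A + P Aᶜ := by
    have := measure_union_le (μ := P) A Aᶜ
    rwa [Set.union_compl_self, measure_univ] at this
  calc ENNReal.ofReal (1 - δ) = 1 - ENNReal.ofReal δ := by
        rw [ENNReal.ofReal_sub _ hδ0.le, ENNReal.ofReal_one]
    _ ≤ 1 - P Aᶜ := tsub_le_tsub_left hbad 1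
    _ ≤ P A := tsub_le_iff_right.2 h1
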